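/- Let n > 1 be an integer such that p = 4n−1 is prime, let M = ⌊n²/p⌋, and for integers m ≥ 0 set Q_m = 1/2 + (1/2)·√(4mp + 3p − 4) and R_m = √(mp). Then (1/2)·∑_{k=1}^{p−1} r_p(k²) = p·(∑_{m=0}^{M} ⌊R_m⌋ + ∑_{m=0}^{M−1} ⌊Q_m⌋) − M·p·(2n−1) + p·(n² + n)/6. -/

import Mathlib

open Finset


lemma sum_Icc_split (f : ℤ → ℤ) (a b c : ℤ) (h1 : a ≤ b + 1) (h2 : b ≤ c) :
    ∑ k ∈ Icc a c, f k = ∑ k ∈ Icc a b, f k + ∑ k ∈ Icc (b+1) c, f k := by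
  rw [← Finset.sum_union]
  · congr 1
    ext x
    simp only [Finset.mem_union, Finset.mem_Icc]
    omega
  · rw [Finset.disjoint_left]
    intro x hx hx'
    simp only [Finset.mem_Icc] at hx hx'
    omega

lemma count_Icc_le (L U v : ℤ) (hLv : L - 1 ≤ v) (hvU : v ≤ U) :
    ∑ m ∈ Icc L U, (if m ≤ v then (1:ℤ) else 0) = v - L + 1 := by
  rw [Finset.sum_boole]
  have : Finset.filter (fun m => m ≤ v) (Icc L U) = Icc L v := by
    ext x; simp only [Finset.mem_filter, Finset.mem_Icc]; omega
  rw [this, Int.card_Icc]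
  omega

lemma count_Icc_ge (L U v : ℤ) (hLv : L ≤ v) (hvU : v ≤ U + 1) :
    ∑ m ∈ Icc L U, (if v ≤ m then (1:ℤ) else 0) = U - v + 1 := by
  rw [Finset.sum_boole]
  have : Finset.filter (fun m => v ≤ m) (Icc L U) = Icc v U := by
    ext x; simp only [Finset.mem_filter, Finset.mem_Icc]; omega
  rw [this, Int.card_Icc]
  omega

lemma sum_sq_Icc : ∀ (N : ℤ), 0 ≤ N → 6 * ∑ k ∈ Icc (1:ℤ) N, k^2 = N * (N+1) * (2*N+1) := by
  refine Int.le_induction (by simp) ?_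
  intro N hN ih
  · 
      have hins : Icc (1:ℤ) (N+1) = insert (N+1) (Icc 1 N) := by
        ext x; simp only [Finset.mem_insert, Finset.mem_Icc]; omega
      rw [hins, Finset.sum_insert (by simp [Finset.mem_Icc])]
      ring_nf
      ring_nf at ih
      linarith

lemma sum_id_Icc : ∀ (N : ℤ), 0 ≤ N → 2 * ∑ k ∈ Icc (1:ℤ) N, k = N * (N+1) := by
  refine Int.le_induction (by simp) ?_
  intro N hN ih
  · 
      have hins : Icc (1:ℤ) (N+1) = insert (N+1) (Icc 1 N) := by
        ext x; simp only [Finset.mem_insert, Finset.mem_Icc]; omega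
      rw [hins, Finset.sum_insert (by simp [Finset.mem_Icc])]
      linarith

lemma int_sqrt_spec (a : ℤ) (h : 0 ≤ a) :
    (Int.sqrt a)^2 ≤ a ∧ a < (Int.sqrt a + 1)^2 := by
  have h1 : Int.sqrt a = ((a.toNat).sqrt : ℤ) := by simp [Int.sqrt]
  have h2 : (a.toNat : ℤ) = a := Int.toNat_of_nonneg h
  constructor
  · rw [h1]
    calc ((a.toNat.sqrt : ℤ))^2 = ((a.toNat.sqrt ^ 2 : ℕ) : ℤ) := by push_cast; ring
    _ ≤ (a.toNat : ℤ) := by exact_mod_cast Nat.sqrt_le' a.toNat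
    _ = a := h2
  · rw [h1]
    calc a = (a.toNat : ℤ) := h2.symm
    _ < ((a.toNat.sqrt.succ ^ 2 : ℕ) : ℤ) := by exact_mod_cast Nat.lt_succ_sqrt' a.toNat
    _ = ((a.toNat.sqrt : ℤ) + 1)^2 := by push_cast; ring

lemma le_int_sqrt {a v : ℤ} (ha : 0 ≤ a) (hv : 0 ≤ v) (h : v^2 ≤ a) : v ≤ Int.sqrt a := by
  by_contra hc
  push_neg at hc
  obtain ⟨h1, h2⟩ := int_sqrt_spec a ha
  have : (Int.sqrt a + 1)^2 ≤ v^2 :=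
    pow_le_pow_left₀ (by have := Int.sqrt_nonneg a; omega) (by omega) 2
  omega

lemma int_sqrt_le {a v : ℤ} (ha : 0 ≤ a) (hv : 0 ≤ v) (h : a < (v+1)^2) : Int.sqrt a ≤ v := by
  by_contra hc
  push_neg at hc
  obtain ⟨h1, h2⟩ := int_sqrt_spec a ha
  have : (v+1)^2 ≤ (Int.sqrt a)^2 := pow_le_pow_left₀ (by omega) (by omega) 2
  omega

lemma int_floor_sqrt (a : ℤ) (h : 0 ≤ a) : ⌊Real.sqrt (a : ℝ)⌋ = Int.sqrt a := by
  obtain ⟨h1, h2⟩ := int_sqrt_spec a h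
  have hs : (0:ℤ) ≤ Int.sqrt a := Int.sqrt_nonneg a
  rw [Int.floor_eq_iff]
  constructor
  · rw [Real.le_sqrt (by exact_mod_cast hs) (by exact_mod_cast h)]
    exact_mod_cast h1
  · rw [show ((Int.sqrt a : ℝ) + 1) = ((Int.sqrt a + 1 : ℤ) : ℝ) by push_cast; ring]
    rw [Real.sqrt_lt' (by exact_mod_cast (by omega : (0:ℤ) < Int.sqrt a + 1))]
    exact_mod_cast h2

lemma floor_half_add_sqrt (D : ℤ) (hD : 0 ≤ D) :
    ⌊(1:ℝ)/2 + Real.sqrt (D:ℝ)/2⌋ = (Int.sqrt D + 1)/2 := by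
  obtain ⟨h1, h2⟩ := int_sqrt_spec D hD
  have hs : (0:ℤ) ≤ Int.sqrt D := Int.sqrt_nonneg D
  set t := Int.sqrt D with ht
  set q : ℤ := (t+1)/2 with hq
  have hq1 : 2*q ≤ t + 1 ∧ t ≤ 2*q := by constructor <;> omega
  have hsl : (t:ℝ) ≤ Real.sqrt (D:ℝ) := by
    rw [Real.le_sqrt (by exact_mod_cast hs) (by exact_mod_cast hD)]
    exact_mod_cast h1
  have hsu : Real.sqrt (D:ℝ) < (t:ℝ) + 1 := by
    rw [show ((t : ℝ) + 1) = ((t + 1 : ℤ) : ℝ) by push_cast; ring]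
    rw [Real.sqrt_lt' (by exact_mod_cast (by omega : (0:ℤ) < t + 1))]
    exact_mod_cast h2
  rw [Int.floor_eq_iff]
  constructor
  · have : (2*q : ℝ) ≤ (t:ℝ) + 1 := by exact_mod_cast hq1.1
    linarith
  · have : (t : ℝ) ≤ (2*q : ℝ) := by exact_mod_cast hq1.2
    linarith

lemma no_eq_sq (n p : ℤ) (hn : 1 < n) (hp : p = 4*n-1) (hpp : Prime p) (m k : ℤ)
    (hm1 : 1 ≤ m) (hm2 : m ≤ n-1) (hk1 : 1 ≤ k) (hk2 : k ≤ 2*n-1) : m * p ≠ k^2 := by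
  intro h
  have hdvd : p ∣ k^2 := ⟨m, by linarith [h]⟩
  have hdvdk : p ∣ k := by
    have := hpp.dvd_of_dvd_pow (n := 2) hdvd
    exact this
  have := Int.le_of_dvd (by omega) hdvdk
  omega


section
variable (n p : ℤ)

-- basic bounds on d k = k^2 / p
lemma dk_le (hn : 1 < n) (hp : p = 4*n-1) (k : ℤ) (hk2 : k ≤ 2*n-1) (hk1 : 1 ≤ k) :
    k^2 / p ≤ n - 1 := by
  have hp0 : 0 < p := by omega
  have : k^2/p < n := by
    rw [Int.ediv_lt_iff_lt_mul hp0]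
    nlinarith
  omega

lemma dk_nonneg (hn : 1 < n) (hp : p = 4*n-1) (k : ℤ) : 0 ≤ k^2 / p :=
  Int.ediv_nonneg (sq_nonneg k) (by omega)

lemma M_le (hn : 1 < n) (hp : p = 4*n-1) : n^2/p ≤ n - 1 := by
  have hp0 : 0 < p := by omega
  have : n^2/p < n := by
    rw [Int.ediv_lt_iff_lt_mul hp0]
    nlinarith
  omega

lemma M_nonneg (hn : 1 < n) (hp : p = 4*n-1) : 0 ≤ n^2/p :=
  Int.ediv_nonneg (sq_nonneg n) (by omega)

lemma s_le (hn : 1 < n) (hp : p = 4*n-1) (m : ℤ) (hm0 : 0 ≤ m) (hm : m ≤ n-1) :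
    Int.sqrt (m*p) ≤ 2*n-1 := by
  apply int_sqrt_le (mul_nonneg hm0 (by omega)) (by omega)
  nlinarith

lemma s_nonneg (m : ℤ) : 0 ≤ Int.sqrt (m*p) := Int.sqrt_nonneg _

lemma SW1 (hn : 1 < n) (hp : p = 4*n-1) (hpp : Prime p) :
    ∑ k ∈ Icc (1:ℤ) (2*n-1), k^2 / p
      = ∑ m ∈ Icc (1:ℤ) (n-1), (2*n - 1 - Int.sqrt (m*p)) := by
  have hp0 : 0 < p := by omega
  have e1 : ∑ k ∈ Icc (1:ℤ) (2*n-1), k^2 / p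
      = ∑ k ∈ Icc (1:ℤ) (2*n-1), ∑ m ∈ Icc (1:ℤ) (n-1), (if m * p ≤ k^2 then (1:ℤ) else 0) := by
    apply Finset.sum_congr rfl
    intro k hk
    simp only [mem_Icc] at hk
    have : ∀ m ∈ Icc (1:ℤ) (n-1), (if m * p ≤ k^2 then (1:ℤ) else 0)
        = (if m ≤ k^2/p then (1:ℤ) else 0) := by
      intro m hm
      exact if_congr (Int.le_ediv_iff_mul_le hp0).symm rfl rfl
    rw [Finset.sum_congr rfl this,
        count_Icc_le 1 (n-1) (k^2/p) (by have := dk_nonneg n p hn hp k; omega)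
          (dk_le n p hn hp k hk.2 hk.1)]
    ring
  rw [e1, Finset.sum_comm]
  apply Finset.sum_congr rfl
  intro m hm
  simp only [mem_Icc] at hm
  have hs0 : 0 ≤ Int.sqrt (m*p) := Int.sqrt_nonneg _
  have hsle : Int.sqrt (m*p) ≤ 2*n-1 := s_le n p hn hp m (by omega) hm.2
  have hmp0 : (0:ℤ) ≤ m*p := mul_nonneg (by omega) (by omega)
  obtain ⟨hs1, hs2⟩ := int_sqrt_spec (m*p) hmp0
  have : ∀ k ∈ Icc (1:ℤ) (2*n-1), (if m * p ≤ k^2 then (1:ℤ) else 0)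
      = (if Int.sqrt (m*p) + 1 ≤ k then (1:ℤ) else 0) := by
    intro k hk
    simp only [mem_Icc] at hk
    apply if_congr _ rfl rfl
    constructor
    · intro h
      by_contra hc
      push_neg at hc
      have : k^2 ≤ (Int.sqrt (m*p))^2 := pow_le_pow_left₀ (by omega) (by omega) 2
      exact no_eq_sq n p hn hp hpp m k hm.1 hm.2 hk.1 hk.2 (by omega)
    · intro h
      have : (Int.sqrt (m*p) + 1)^2 ≤ k^2 := pow_le_pow_left₀ (by omega) h 2
      omega
  rw [Finset.sum_congr rfl this,
      count_Icc_ge 1 (2*n-1) (Int.sqrt (m*p) + 1) (by omega) (by omega)]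
  ring
end


section
variable (n p : ℤ)

lemma dk_ge_M (hn : 1 < n) (hp : p = 4*n-1) (k : ℤ) (hk : n ≤ k) : n^2/p ≤ k^2/p := by
  apply Int.ediv_le_ediv (by omega)
  nlinarith

lemma SW2 (hn : 1 < n) (hp : p = 4*n-1) (hpp : Prime p) :
    ∑ m ∈ Icc (n^2/p + 1) (n-1), Int.sqrt (m*p)
      = ∑ _k ∈ Icc (1:ℤ) (n-1), (n - 1 - n^2/p)
        + ∑ k ∈ Icc n (2*n-1), (n - 1 - k^2/p) := by
  have hp0 : 0 < p := by omega
  have hM0 := M_nonneg n p hn hp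
  have hMle := M_le n p hn hp
  have hMp : p * (n^2/p) + n^2 % p = n^2 := Int.mul_ediv_add_emod (n^2) p
  have hMr : 0 ≤ n^2 % p ∧ n^2 % p < p := ⟨Int.emod_nonneg _ (by omega), Int.emod_lt_of_pos _ hp0⟩
  -- step 1: per-m expansion
  have e1 : ∑ m ∈ Icc (n^2/p + 1) (n-1), Int.sqrt (m*p)
      = ∑ m ∈ Icc (n^2/p + 1) (n-1), ∑ k ∈ Icc (1:ℤ) (2*n-1), (if k^2 ≤ m*p then (1:ℤ) else 0) := by
    apply Finset.sum_congr rfl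
    intro m hm
    simp only [mem_Icc] at hm
    have hmp0 : (0:ℤ) ≤ m*p := mul_nonneg (by omega) (by omega)
    obtain ⟨hs1, hs2⟩ := int_sqrt_spec (m*p) hmp0
    have hs0 : 0 ≤ Int.sqrt (m*p) := Int.sqrt_nonneg _
    have hsle : Int.sqrt (m*p) ≤ 2*n-1 := s_le n p hn hp m (by omega) hm.2
    have : ∀ k ∈ Icc (1:ℤ) (2*n-1), (if k^2 ≤ m*p then (1:ℤ) else 0)
        = (if k ≤ Int.sqrt (m*p) then (1:ℤ) else 0) := by
      intro k hk
      simp only [mem_Icc] at hk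
      apply if_congr _ rfl rfl
      constructor
      · intro h
        by_contra hc
        push_neg at hc
        have : (Int.sqrt (m*p) + 1)^2 ≤ k^2 := pow_le_pow_left₀ (by omega) (by omega) 2
        omega
      · intro h
        have : k^2 ≤ (Int.sqrt (m*p))^2 := pow_le_pow_left₀ (by omega) h 2
        omega
    rw [Finset.sum_congr rfl this, count_Icc_le 1 (2*n-1) _ (by omega) (by omega)]
    ring
  rw [e1, Finset.sum_comm,
      sum_Icc_split (fun k => ∑ m ∈ Icc (n^2/p + 1) (n-1), (if k^2 ≤ m*p then (1:ℤ) else 0))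
        1 (n-1) (2*n-1) (by omega) (by omega)]
  congr 1
  · -- k in [1, n-1] : condition always true
    apply Finset.sum_congr rfl
    intro k hk
    simp only [mem_Icc] at hk
    have : ∀ m ∈ Icc (n^2/p + 1) (n-1), (if k^2 ≤ m*p then (1:ℤ) else 0)
        = (if (n^2/p + 1) ≤ m then (1:ℤ) else 0) := by
      intro m hm
      simp only [mem_Icc] at hm
      have h1 : k^2 ≤ m * p := by
        have h2 : (n^2/p + 1) * p ≤ m * p := mul_le_mul_of_nonneg_right hm.1 (by omega)
        nlinarith [hMp, hMr.1, hMr.2]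
      rw [if_pos h1, if_pos hm.1]
    rw [Finset.sum_congr rfl this, count_Icc_ge _ _ _ (by omega) (by omega)]
    ring
  · -- k in [n, 2n-1]
    have hnn : n - 1 + 1 = n := by ring
    rw [hnn]
    apply Finset.sum_congr rfl
    intro k hk
    simp only [mem_Icc] at hk
    have hdM : n^2/p ≤ k^2/p := dk_ge_M n p hn hp k hk.1
    have hdle : k^2/p ≤ n - 1 := dk_le n p hn hp k hk.2 (by omega)
    have hdk : p * (k^2/p) + k^2 % p = k^2 := Int.mul_ediv_add_emod (k^2) p
    have hdr : 0 ≤ k^2 % p ∧ k^2 % p < p := ⟨Int.emod_nonneg _ (by omega), Int.emod_lt_of_pos _ hp0⟩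
    have : ∀ m ∈ Icc (n^2/p + 1) (n-1), (if k^2 ≤ m*p then (1:ℤ) else 0)
        = (if k^2/p + 1 ≤ m then (1:ℤ) else 0) := by
      intro m hm
      simp only [mem_Icc] at hm
      apply if_congr _ rfl rfl
      constructor
      · intro h
        have hle : k^2/p ≤ m := by
          calc k^2/p ≤ (m*p)/p := Int.ediv_le_ediv hp0 h
          _ = m := Int.mul_ediv_cancel m (by omega)
        rcases eq_or_lt_of_le hle with heq | hlt
        · exfalso
          apply no_eq_sq n p hn hp hpp m k (by omega) hm.2 (by omega) hk.2
          have : m * p ≤ k^2 := by rw [← heq]; nlinarith [hdk, hdr.1]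
          omega
        · omega
      · intro h
        have h2 : (k^2/p + 1) * p ≤ m * p := mul_le_mul_of_nonneg_right h (by omega)
        nlinarith [hdk, hdr.1, hdr.2]
    rw [Finset.sum_congr rfl this, count_Icc_ge _ _ _ (by omega) (by omega)]
    ring
end


section
variable (n p : ℤ)

lemma SW3 (hn : 1 < n) (hp : p = 4*n-1) (hpp : Prime p) :
    ∑ m ∈ Icc (0:ℤ) (n^2/p - 1), (Int.sqrt (4*m*p+3*p-4) + 1)/2
      = ∑ k ∈ Icc n (2*n-1), (n^2/p - k^2/p - n + k) := by
  have hp0 : 0 < p := by omega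
  have hM0 := M_nonneg n p hn hp
  have hMle := M_le n p hn hp
  have hMp : p * (n^2/p) + n^2 % p = n^2 := Int.mul_ediv_add_emod (n^2) p
  have hMr : 0 ≤ n^2 % p ∧ n^2 % p < p := ⟨Int.emod_nonneg _ (by omega), Int.emod_lt_of_pos _ hp0⟩
  have e1 : ∑ m ∈ Icc (0:ℤ) (n^2/p - 1), (Int.sqrt (4*m*p+3*p-4) + 1)/2
      = ∑ m ∈ Icc (0:ℤ) (n^2/p - 1), ∑ k ∈ Icc n (2*n-1),
          (if k^2/p + n - k ≤ m then (1:ℤ) else 0) := by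
    apply Finset.sum_congr rfl
    intro m hm
    simp only [mem_Icc] at hm
    set D : ℤ := 4*m*p+3*p-4 with hD
    have hD0 : (0:ℤ) ≤ D := by nlinarith [mul_nonneg hm.1 hp0.le]
    obtain ⟨hs1, hs2⟩ := int_sqrt_spec D hD0
    set t : ℤ := Int.sqrt D with ht
    have ht0 : 0 ≤ t := Int.sqrt_nonneg D
    have ht1 : 1 ≤ t := le_int_sqrt hD0 (by omega) (by nlinarith [mul_nonneg hm.1 hp0.le])
    have ht2 : t ≤ 2*n-1 := by
      apply int_sqrt_le hD0 (by omega)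
      have h4 : m * p ≤ (n^2/p - 1) * p := mul_le_mul_of_nonneg_right hm.2 (by omega)
      nlinarith [hMp, hMr.1]
    have hcong : ∀ k ∈ Icc n (2*n-1), (if k^2/p + n - k ≤ m then (1:ℤ) else 0)
        = (if 2*n - (t+1)/2 ≤ k then (1:ℤ) else 0) := by
      intro k hk
      simp only [mem_Icc] at hk
      apply if_congr _ rfl rfl
      have step1 : (k^2/p + n - k ≤ m) ↔ k^2 < (m + k - n + 1) * p := by
        rw [← Int.ediv_lt_iff_lt_mul hp0]
        generalize k^2 / p = d
        omega
      have key : (4*m+3)*p - (p-2*k)^2 = 4*((m + k - n + 1)*p - k^2) := by rw [hp]; ring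
      have step2 : k^2 < (m + k - n + 1) * p ↔ (p-2*k)^2 < (4*m+3)*p := by
        constructor <;> intro h <;> nlinarith [key]
      have hodd : (p-2*k)^2 = 4*((2*n-1-k)^2 + (2*n-1-k)) + 1 := by rw [hp]; ring
      have hB : (4*m+3)*p = 4*(4*m*n - m + 3*n - 1) + 1 := by rw [hp]; ring
      have hDq : D = (4*m+3)*p - 4 := by rw [hD]; ring
      have step3 : (p-2*k)^2 < (4*m+3)*p ↔ (p-2*k)^2 ≤ D := by
        constructor
        · intro h
          have h1 : (2*n-1-k)^2 + (2*n-1-k) < 4*m*n - m + 3*n - 1 := by linarith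
          have h2 := Int.lt_iff_add_one_le.mp h1
          linarith
        · intro h; linarith
      have hj1 : 1 ≤ p - 2*k := by omega
      have step4 : (p-2*k)^2 ≤ D ↔ p - 2*k ≤ t := by
        constructor
        · intro h
          by_contra hc
          push_neg at hc
          have : (t+1)^2 ≤ (p-2*k)^2 := pow_le_pow_left₀ (by omega) (by omega) 2
          omega
        · intro h
          calc (p-2*k)^2 ≤ t^2 := pow_le_pow_left₀ (by omega) h 2
          _ ≤ D := hs1
      have step5 : p - 2*k ≤ t ↔ 2*n - (t+1)/2 ≤ k := by omega
      rw [step1, step2, step3, step4, step5]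
    rw [Finset.sum_congr rfl hcong, count_Icc_ge n (2*n-1) _ (by omega) (by omega)]
    omega
  rw [e1, Finset.sum_comm]
  apply Finset.sum_congr rfl
  intro k hk
  simp only [mem_Icc] at hk
  have hv0 : k - n ≤ k^2/p := by
    rw [Int.le_ediv_iff_mul_le hp0]
    nlinarith [sq_nonneg (k - 2*n)]
  have hvM : k^2/p + n - k ≤ n^2/p := by
    have : k^2/p < n^2/p + k - n + 1 := by
      rw [Int.ediv_lt_iff_lt_mul hp0]
      have hfac : 0 ≤ (k-n)*(3*n-1-k) := mul_nonneg (by omega) (by omega)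
      nlinarith [hMp, hMr.2]
    omega
  rw [count_Icc_ge 0 (n^2/p - 1) _ (by omega) (by omega)]
  ring
end


lemma sum_const_Icc (a b c : ℤ) (h : a ≤ b + 1) : ∑ _k ∈ Icc a b, c = (b + 1 - a) * c := by
  rw [Finset.sum_const, Int.card_Icc, nsmul_eq_mul]
  congr 1
  omega

/-- Corollary 10: for `p = 4n-1` prime with `n > 1`,
`(1/2)∑_{k=1}^{p-1} r_p(k²) = p(∑_{m=0}^{M}⌊R_m⌋ + ∑_{m=0}^{M-1}⌊Q_m⌋)
  - Mp(2n-1) + p(n²+n)/6`. -/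
theorem stmt_17 (n : ℤ) (hn : 1 < n) (p : ℤ) (hp : p = 4 * n - 1) (hpp : Prime p)
    (M : ℤ) (hM : M = n ^ 2 / p)
    (Q R : ℤ → ℝ)
    (hQ : ∀ m, Q m = 1 / 2 + Real.sqrt (4 * (m : ℝ) * (p : ℝ) + 3 * (p : ℝ) - 4) / 2)
    (hR : ∀ m, R m = Real.sqrt ((m : ℝ) * (p : ℝ))) :
    (1 / 2 : ℝ) * ∑ k ∈ Finset.Icc (1 : ℤ) (p - 1), ((k ^ 2 % p : ℤ) : ℝ) =
      (p : ℝ) * ((∑ m ∈ Finset.Icc (0 : ℤ) M, (⌊R m⌋ : ℝ))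
                  + ∑ m ∈ Finset.Icc (0 : ℤ) (M - 1), (⌊Q m⌋ : ℝ))
      - (M : ℝ) * (p : ℝ) * (2 * (n : ℝ) - 1)
      + (p : ℝ) * ((n : ℝ) ^ 2 + (n : ℝ)) / 6 := by
  have hp' : p = 4*n - 1 := hp
  have hp0 : 0 < p := by omega
  have hM0 : 0 ≤ M := hM ▸ M_nonneg n p hn hp'
  have hMle : M ≤ n - 1 := hM ▸ M_le n p hn hp'
  -- floor rewrites
  have hRsum : ∑ m ∈ Icc (0:ℤ) M, (⌊R m⌋ : ℝ)
      = ((∑ m ∈ Icc (0:ℤ) M, Int.sqrt (m*p) : ℤ) : ℝ) := by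
    push_cast
    apply Finset.sum_congr rfl
    intro m hm
    simp only [mem_Icc] at hm
    have : ⌊R m⌋ = Int.sqrt (m*p) := by
      rw [hR m, show (m:ℝ)*(p:ℝ) = ((m*p : ℤ):ℝ) by push_cast; ring]
      exact int_floor_sqrt _ (mul_nonneg hm.1 hp0.le)
    exact_mod_cast this
  have hQsum : ∑ m ∈ Icc (0:ℤ) (M-1), (⌊Q m⌋ : ℝ)
      = ((∑ m ∈ Icc (0:ℤ) (M-1), (Int.sqrt (4*m*p+3*p-4) + 1)/2 : ℤ) : ℝ) := by
    push_cast
    apply Finset.sum_congr rfl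
    intro m hm
    simp only [mem_Icc] at hm
    have : ⌊Q m⌋ = (Int.sqrt (4*m*p+3*p-4) + 1)/2 := by
      rw [hQ m, show 4*(m:ℝ)*(p:ℝ) + 3*(p:ℝ) - 4 = ((4*m*p+3*p-4 : ℤ):ℝ) by push_cast; ring]
      exact floor_half_add_sqrt _ (by nlinarith [mul_nonneg hm.1 hp0.le])
    exact_mod_cast this
  have hL : ∑ k ∈ Icc (1:ℤ) (p-1), ((k ^ 2 % p : ℤ) : ℝ)
      = ((∑ k ∈ Icc (1:ℤ) (p-1), k^2 % p : ℤ) : ℝ) := by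
    push_cast
    ring
  rw [hRsum, hQsum, hL]
  -- halving
  have hhalf : ∑ k ∈ Icc (1:ℤ) (p-1), k^2 % p = 2 * ∑ k ∈ Icc (1:ℤ) (2*n-1), k^2 % p := by
    rw [sum_Icc_split (fun k => k^2 % p) 1 (2*n-1) (p-1) (by omega) (by omega)]
    have hre : ∑ k ∈ Icc (2*n-1+1) (p-1), k^2 % p = ∑ k ∈ Icc (1:ℤ) (2*n-1), k^2 % p := by
      apply Finset.sum_nbij' (fun k => p - k) (fun k => p - k)
      · intro a ha; simp only [mem_Icc] at *; omega
      · intro a ha; simp only [mem_Icc] at *; omega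
      · intro a _; ring
      · intro a _; ring
      · intro a _
        have h1 : a^2 = (p-a)^2 + (2*a - p)*p := by ring
        rw [h1, Int.add_mul_emod_self_right]
    omega
  -- emod to ediv
  have hmod : ∑ k ∈ Icc (1:ℤ) (2*n-1), k^2 % p
      = ∑ k ∈ Icc (1:ℤ) (2*n-1), k^2 - p * ∑ k ∈ Icc (1:ℤ) (2*n-1), (k^2/p) := by
    rw [Finset.mul_sum, ← Finset.sum_sub_distrib]
    exact Finset.sum_congr rfl (fun k _ => Int.emod_def _ _)
  have h6sq : 6 * ∑ k ∈ Icc (1:ℤ) (2*n-1), k^2 = (2*n-1) * (2*n) * p := by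
    rw [sum_sq_Icc (2*n-1) (by omega)]
    rw [hp']; ring
  -- split of sqrt sums
  have hS0 : ∑ m ∈ Icc (0:ℤ) M, Int.sqrt (m*p) = ∑ m ∈ Icc (1:ℤ) M, Int.sqrt (m*p) := by
    rw [sum_Icc_split (fun m => Int.sqrt (m*p)) 0 0 M (by omega) hM0]
    norm_num
  have hSn : ∑ m ∈ Icc (1:ℤ) (n-1), Int.sqrt (m*p)
      = ∑ m ∈ Icc (1:ℤ) M, Int.sqrt (m*p) + ∑ m ∈ Icc (M+1) (n-1), Int.sqrt (m*p) :=
    sum_Icc_split (fun m => Int.sqrt (m*p)) 1 M (n-1) (by omega) (by omega)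
  -- eq1 from SW1
  have eq1 : ∑ k ∈ Icc (1:ℤ) (2*n-1), (k^2/p)
      = (n-1)*(2*n-1) - (∑ m ∈ Icc (1:ℤ) M, Int.sqrt (m*p)
          + ∑ m ∈ Icc (M+1) (n-1), Int.sqrt (m*p)) := by
    rw [SW1 n p hn hp' hpp, Finset.sum_sub_distrib, sum_const_Icc 1 (n-1) (2*n-1) (by omega), ← hSn]
    ring
  -- eq2 from SW2
  have eq2 : ∑ m ∈ Icc (M+1) (n-1), Int.sqrt (m*p)
      = (n-1)*(n-1-M) + n*(n-1) - ∑ k ∈ Icc n (2*n-1), (k^2/p) := by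
    have h := SW2 n p hn hp' hpp
    rw [← hM] at h
    rw [h, sum_const_Icc 1 (n-1) (n-1-M) (by omega), Finset.sum_sub_distrib,
        sum_const_Icc n (2*n-1) (n-1) (by omega)]
    ring
  -- eq3 from SW3
  have eq3 : ∑ m ∈ Icc (0:ℤ) (M-1), (Int.sqrt (4*m*p+3*p-4) + 1)/2
      = n*(M-n) - ∑ k ∈ Icc n (2*n-1), (k^2/p) + ∑ k ∈ Icc n (2*n-1), k := by
    have h := SW3 n p hn hp' hpp
    rw [← hM] at h
    rw [h]
    have : ∀ k ∈ Icc n (2*n-1), M - k^2/p - n + k = ((M-n) - k^2/p) + k := by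
      intro k _; ring
    rw [Finset.sum_congr rfl this, Finset.sum_add_distrib, Finset.sum_sub_distrib,
        sum_const_Icc n (2*n-1) (M-n) (by omega)]
    ring
  -- eq4 : value of ∑ k over Icc n (2n-1)
  have eq4 : 2 * ∑ k ∈ Icc n (2*n-1), k = (2*n-1)*(2*n) - (n-1)*n := by
    have hsplit : ∑ k ∈ Icc (1:ℤ) (2*n-1), k
        = ∑ k ∈ Icc (1:ℤ) (n-1), k + ∑ k ∈ Icc (n-1+1) (2*n-1), k :=
      sum_Icc_split (fun k => k) 1 (n-1) (2*n-1) (by omega) (by omega)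
    rw [show n-1+1 = n by ring] at hsplit
    have g1 := sum_id_Icc (2*n-1) (by omega)
    have g2 := sum_id_Icc (n-1) (by omega)
    linarith
  -- final integer identity
  have hZ : 3 * ∑ k ∈ Icc (1:ℤ) (p-1), k^2 % p
      = 6*p*(∑ m ∈ Icc (0:ℤ) M, Int.sqrt (m*p)
          + ∑ m ∈ Icc (0:ℤ) (M-1), (Int.sqrt (4*m*p+3*p-4) + 1)/2)
        - 6*M*p*(2*n-1) + p*(n^2+n) := by
    linear_combination 3*hhalf + 6*hmod + h6sq + (-6*p)*eq1 + (6*p)*eq2 + (-6*p)*eq3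
      + (-3*p)*eq4 + (-6*p)*hS0
  have hZR : 3 * ((∑ k ∈ Icc (1:ℤ) (p-1), k^2 % p : ℤ) : ℝ)
      = 6*(p:ℝ)*(((∑ m ∈ Icc (0:ℤ) M, Int.sqrt (m*p) : ℤ):ℝ)
          + ((∑ m ∈ Icc (0:ℤ) (M-1), (Int.sqrt (4*m*p+3*p-4) + 1)/2 : ℤ):ℝ))
        - 6*(M:ℝ)*(p:ℝ)*(2*(n:ℝ)-1) + (p:ℝ)*((n:ℝ)^2+(n:ℝ)) := by
    exact_mod_cast hZ
  linarith
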